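/- Let F be a field with char F ≠ 2 that is Pythagorean, and let H = H(1,1)_F be the division quaternion algebra with i² = j² = −1 (assume H is a division ring). Then every element of H is a product of two commutators: H = {(x₁y₁ − y₁x₁)(x₂y₂ − y₂x₂) : x₁, y₁, x₂, y₂ ∈ H}. -/

import Mathlib

open Quaternion

namespace Stmt13Aux

variable {F : Type*} [Field F]

/-- For any quaternion, there is a nonzero pure quaternion whose imaginary part is
orthogonal to it. -/
lemma exists_ortho (α : ℍ[F, -1, -1]) :
    ∃ p : ℍ[F, -1, -1], p ≠ 0 ∧ p.re = 0 ∧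
      p.imI * α.imI + p.imJ * α.imJ + p.imK * α.imK = 0 := by
  by_cases h : α.imI = 0 ∧ α.imJ = 0
  · refine ⟨⟨0, 1, 0, 0⟩, ?_, rfl, ?_⟩
    · intro hc
      have := congrArg QuaternionAlgebra.imI hc
      simp at this
    · simp [h.1]
  · refine ⟨⟨0, α.imJ, -α.imI, 0⟩, ?_, rfl, by ring⟩
    intro hc
    apply h
    constructor
    · have := congrArg QuaternionAlgebra.imJ hc
      simpa using this
    · have := congrArg QuaternionAlgebra.imI hc
      simpa using this

lemma pure_sq (p : ℍ[F, -1, -1]) (hp : p.re = 0) :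
    p * p = ((-(p.imI ^ 2 + p.imJ ^ 2 + p.imK ^ 2) : F) : ℍ[F, -1, -1]) := by
  ext <;>
    simp [QuaternionAlgebra.re_mul, QuaternionAlgebra.imI_mul, QuaternionAlgebra.imJ_mul,
      QuaternionAlgebra.imK_mul, QuaternionAlgebra.re_coe, QuaternionAlgebra.imI_coe,
      QuaternionAlgebra.imJ_coe, QuaternionAlgebra.imK_coe, ← QuaternionAlgebra.coe_pow, hp] <;> ring

lemma pure_norm_ne (hdiv : ∀ x : ℍ[F, -1, -1], x ≠ 0 → IsUnit x)
    (p : ℍ[F, -1, -1]) (hp0 : p ≠ 0) (hp : p.re = 0) :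
    (-(p.imI ^ 2 + p.imJ ^ 2 + p.imK ^ 2) : F) ≠ 0 := by
  have hu : IsUnit (p * p) := (hdiv p hp0).mul (hdiv p hp0)
  rw [pure_sq p hp] at hu
  intro hc
  rw [hc] at hu
  simp at hu

/-- Key identity: if `p` and `v` are pure with orthogonal imaginary parts, then
`p*(p*v) - (p*v)*p = (2*c) • v` where `c = -(|p|²)`. -/
lemma key (p v : ℍ[F, -1, -1]) (hp : p.re = 0) (hv : v.re = 0)
    (hdot : p.imI * v.imI + p.imJ * v.imJ + p.imK * v.imK = 0) :
    p * (p * v) - (p * v) * p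
      = (2 * (-(p.imI ^ 2 + p.imJ ^ 2 + p.imK ^ 2)) : F) • v := by
  ext <;>
    simp only [QuaternionAlgebra.re_mul, QuaternionAlgebra.imI_mul, QuaternionAlgebra.imJ_mul,
      QuaternionAlgebra.imK_mul, QuaternionAlgebra.re_sub, QuaternionAlgebra.imI_sub,
      QuaternionAlgebra.imJ_sub, QuaternionAlgebra.imK_sub, QuaternionAlgebra.re_smul,
      QuaternionAlgebra.imI_smul, QuaternionAlgebra.imJ_smul, QuaternionAlgebra.imK_smul,
      hp, hv, smul_eq_mul]
  · ring
  · linear_combination (2 * p.imI) * hdot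
  · linear_combination (2 * p.imJ) * hdot
  · linear_combination (2 * p.imK) * hdot

/-- Every pure quaternion is a commutator. -/
lemma pure_is_comm (h2 : (2 : F) ≠ 0) (hdiv : ∀ x : ℍ[F, -1, -1], x ≠ 0 → IsUnit x)
    (v : ℍ[F, -1, -1]) (hv : v.re = 0) :
    ∃ x y : ℍ[F, -1, -1], v = x * y - y * x := by
  obtain ⟨p, hp0, hpre, hdot⟩ := exists_ortho v
  set c : F := -(p.imI ^ 2 + p.imJ ^ 2 + p.imK ^ 2) with hc
  have hcne : c ≠ 0 := pure_norm_ne hdiv p hp0 hpre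
  have h2c : (2 * c : F) ≠ 0 := mul_ne_zero h2 hcne
  refine ⟨p, ((2 * c)⁻¹ : F) • (p * v), ?_⟩
  have hd : p.imI * v.imI + p.imJ * v.imJ + p.imK * v.imK = 0 := hdot
  rw [mul_smul_comm, smul_mul_assoc, ← smul_sub, key p v hpre hv hd, smul_smul,
    inv_mul_cancel₀ h2c, one_smul]

/-- Every nonzero quaternion is a product of two nonzero pure quaternions. -/
lemma factor (hdiv : ∀ x : ℍ[F, -1, -1], x ≠ 0 → IsUnit x)
    (α : ℍ[F, -1, -1]) (hα : α ≠ 0) :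
    ∃ p q : ℍ[F, -1, -1], p.re = 0 ∧ q.re = 0 ∧ α = p * q := by
  obtain ⟨p, hp0, hpre, hdot⟩ := exists_ortho α
  set c : F := -(p.imI ^ 2 + p.imJ ^ 2 + p.imK ^ 2) with hc
  have hcne : c ≠ 0 := pure_norm_ne hdiv p hp0 hpre
  refine ⟨p, (c⁻¹ : F) • (p * α), hpre, ?_, ?_⟩
  · have hre : (p * α).re = 0 := by
      simp only [QuaternionAlgebra.re_mul, hpre]
      linear_combination -hdot
    simp [hre]
  · rw [mul_smul_comm, ← mul_assoc, pure_sq p hpre, ← hc]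
    rw [QuaternionAlgebra.coe_mul_eq_smul, smul_smul, inv_mul_cancel₀ hcne, one_smul]

end Stmt13Aux

/-- over a Pythagorean field of characteristic not 2, every element of the
division quaternion algebra `ℍ(1,1)_F` is a product of two commutators. -/
theorem stmt_13 (F : Type*) [Field F] (h2 : (2 : F) ≠ 0)
    (hpyth : ∀ x y : F, ∃ z : F, x ^ 2 + y ^ 2 = z ^ 2)
    (hdiv : ∀ x : ℍ[F, -1, -1], x ≠ 0 → IsUnit x)
    (α : ℍ[F, -1, -1]) :
    ∃ x₁ y₁ x₂ y₂ : ℍ[F, -1, -1],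
      α = (x₁ * y₁ - y₁ * x₁) * (x₂ * y₂ - y₂ * x₂) := by
  by_cases hα : α = 0
  · exact ⟨0, 0, 0, 0, by simp [hα]⟩
  · obtain ⟨p, q, hp, hq, hpq⟩ := Stmt13Aux.factor hdiv α hα
    obtain ⟨x₁, y₁, h₁⟩ := Stmt13Aux.pure_is_comm h2 hdiv p hp
    obtain ⟨x₂, y₂, h₂⟩ := Stmt13Aux.pure_is_comm h2 hdiv q hq
    exact ⟨x₁, y₁, x₂, y₂, by rw [hpq, h₁, h₂]⟩
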